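/- arXiv:math/0510105 — 2 statements merged into one kernel-verified Lean document; each statement's English description precedes it below -/
import Mathlib

section
/- Let F be an exposed face of a nonempty compact convex set C in the dual V* of a finite-dimensional real normed space V. Suppose there exist a sequence (p_n) in V and ε > 0 such that Σ_{i=0}^{n−1} |p_{i+1} − p_i|_F ≤ |p_n − p_0|_F + ε for all n ∈ ℕ, and such that the functions |p_n − ·|_F − |p_n|_F converge pointwise on V to a lower-semicontinuous convex function g. Then there exist a sequence (q_n) in V and ε′ > 0 such that Σ_{i=0}^{n−1} |q_{i+1} − q_i|_C ≤ |q_n − q_0|_C + ε′ for all n ∈ ℕ, and the functions |q_n − ·|_C − |q_n|_C converge pointwise on V to g. -/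
open Filter Topology Set

noncomputable section

/-- `F` is an exposed face of `C`: the intersection of `C` with a supporting
hyperplane of `C`. -/
def IsExposedFace {W : Type*} [AddCommGroup W] [Module ℝ W] (C F : Set W) : Prop :=
  ∃ (l : W →ₗ[ℝ] ℝ) (c : ℝ), (∀ x ∈ C, l x ≤ c) ∧ (∃ x ∈ C, l x = c) ∧
    F = {x ∈ C | l x = c}

/-- For a set `K ⊆ V*` and `p ∈ V`, `|p|_K := −inf_{q ∈ K} ⟨q, p⟩`. -/
def mnorm {V : Type*} [NormedAddCommGroup V] [NormedSpace ℝ V]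
    (K : Set (V →L[ℝ] ℝ)) (p : V) : ℝ :=
  - sInf ((fun q : V →L[ℝ] ℝ => q p) '' K)

section Helpers

variable {V : Type*} [NormedAddCommGroup V] [NormedSpace ℝ V]

lemma mnorm_exists_min (K : Set (V →L[ℝ] ℝ)) (hK : IsCompact K) (hne : K.Nonempty) (p : V) :
    ∃ q ∈ K, mnorm K p = -(q p) ∧ ∀ r ∈ K, q p ≤ r p := by
  obtain ⟨q, hqK, hq⟩ := hK.exists_isMinOn hne
    ((ContinuousLinearMap.apply ℝ ℝ p).continuous.continuousOn)
  have hq' : ∀ r ∈ K, q p ≤ r p := fun r hr => isMinOn_iff.mp hq r hr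
  have hleast : IsLeast ((fun r : V →L[ℝ] ℝ => r p) '' K) (q p) :=
    ⟨⟨q, hqK, rfl⟩, by rintro _ ⟨r, hr, rfl⟩; exact hq' r hr⟩
  exact ⟨q, hqK, by rw [mnorm, hleast.csInf_eq], hq'⟩

lemma mnorm_neg_le (K : Set (V →L[ℝ] ℝ)) (hK : IsCompact K) (hne : K.Nonempty) (p : V)
    {q : V →L[ℝ] ℝ} (hq : q ∈ K) : -(q p) ≤ mnorm K p := by
  obtain ⟨r, hrK, hr, hmin⟩ := mnorm_exists_min K hK hne p
  rw [hr]
  exact neg_le_neg (hmin q hq)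

lemma mnorm_sub_le (K : Set (V →L[ℝ] ℝ)) (hK : IsCompact K) (hne : K.Nonempty)
    {M : ℝ} (hM : ∀ q ∈ K, ‖q‖ ≤ M) (a b : V) :
    mnorm K a - mnorm K b ≤ M * ‖a - b‖ := by
  obtain ⟨q, hqK, hqa, _⟩ := mnorm_exists_min K hK hne a
  have h1 : -(q b) ≤ mnorm K b := mnorm_neg_le K hK hne b hqK
  have h2 : q (b - a) ≤ M * ‖a - b‖ := by
    calc q (b - a) ≤ ‖q‖ * ‖b - a‖ := le_trans (le_abs_self _) (q.le_opNorm (b - a))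
    _ ≤ M * ‖a - b‖ := by
        rw [norm_sub_rev b a]
        exact mul_le_mul_of_nonneg_right (hM q hqK) (norm_nonneg _)
  have h3 : q b - q a ≤ M * ‖a - b‖ := by rwa [map_sub] at h2
  linarith

end Helpers

/-- Lemma on lifting almost-geodesics from an exposed face `F` of a compact convex
set `C ⊆ V*` to `C` itself. -/
theorem almost_geodesic_lifting (V : Type*) [NormedAddCommGroup V] [NormedSpace ℝ V]
    [FiniteDimensional ℝ V]
    (C F : Set (V →L[ℝ] ℝ)) (hCne : C.Nonempty) (hCcpt : IsCompact C)
    (hCconv : Convex ℝ C) (hF : IsExposedFace C F)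
    (p : ℕ → V) (ε : ℝ) (hε : 0 < ε)
    (hgeo : ∀ n : ℕ,
      ∑ i ∈ Finset.range n, mnorm F (p (i + 1) - p i) ≤ mnorm F (p n - p 0) + ε)
    (g : V → ℝ) (hglsc : LowerSemicontinuous g) (hgconv : ConvexOn ℝ Set.univ g)
    (hptwise : ∀ x : V,
      Tendsto (fun n => mnorm F (p n - x) - mnorm F (p n)) atTop (𝓝 (g x))) :
    ∃ (q : ℕ → V) (ε' : ℝ), 0 < ε' ∧
      (∀ n : ℕ,
        ∑ i ∈ Finset.range n, mnorm C (q (i + 1) - q i) ≤ mnorm C (q n - q 0) + ε') ∧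
      ∀ x : V, Tendsto (fun n => mnorm C (q n - x) - mnorm C (q n)) atTop (𝓝 (g x)) := by
  classical
  obtain ⟨l, c, hlec, ⟨w₀, hw₀C, hw₀c⟩, hFdef⟩ := hF
  -- represent `l` by a vector `v ∈ V`
  obtain ⟨v, hv⟩ : ∃ v : V, ∀ q : V →L[ℝ] ℝ, l q = q v := by
    refine ⟨(Module.evalEquiv ℝ V).symm
      (l ∘ₗ (LinearMap.toContinuousLinearMap : (V →ₗ[ℝ] ℝ) ≃ₗ[ℝ] (V →L[ℝ] ℝ)).toLinearMap),
      fun q => ?_⟩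
    have h := Module.apply_evalEquiv_symm_apply ℝ V (q : V →ₗ[ℝ] ℝ)
      (l ∘ₗ (LinearMap.toContinuousLinearMap : (V →ₗ[ℝ] ℝ) ≃ₗ[ℝ] (V →L[ℝ] ℝ)).toLinearMap)
    have h2 : LinearMap.toContinuousLinearMap (q : V →ₗ[ℝ] ℝ) = q :=
      ContinuousLinearMap.coe_injective rfl
    simp only [LinearMap.coe_comp, Function.comp_apply, LinearEquiv.coe_coe] at h
    rw [h2] at h
    exact h.symm
  have hFne : F.Nonempty := ⟨w₀, by rw [hFdef]; exact ⟨hw₀C, hw₀c⟩⟩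
  have hFsub : F ⊆ C := by rw [hFdef]; intro q hq; exact hq.1
  have hFeq : F = C ∩ (fun q : V →L[ℝ] ℝ => q v) ⁻¹' {c} := by
    rw [hFdef]; ext q; simp [hv]
  have hFcpt : IsCompact F := by
    rw [hFeq]
    exact hCcpt.inter_right (isClosed_singleton.preimage
      (ContinuousLinearMap.apply ℝ ℝ v).continuous)
  have hqvc : ∀ q ∈ C, q v ≤ c := fun q hq => (hv q) ▸ hlec q hq
  have hFv : ∀ q ∈ F, q v = c := by
    intro q hq; rw [hFeq] at hq; exact hq.2
  -- uniform bound on `C`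
  obtain ⟨M, hM⟩ : ∃ M : ℝ, ∀ q ∈ C, ‖q‖ ≤ M := hCcpt.isBounded.exists_norm_le
  have hM0 : 0 ≤ M := le_trans (norm_nonneg _) (hM w₀ hw₀C)
  -- the error function
  set e : V → ℝ → ℝ := fun y s => mnorm C (y - s • v) - s * c - mnorm F y with he
  -- K1 : nonnegativity
  have K1 : ∀ (y : V) (s : ℝ), 0 ≤ e y s := by
    intro y s
    obtain ⟨q, hqF, hq, _⟩ := mnorm_exists_min F hFcpt hFne y
    have h1 : -(q (y - s • v)) ≤ mnorm C (y - s • v) :=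
      mnorm_neg_le C hCcpt hCne _ (hFsub hqF)
    have h2 : q (y - s • v) = q y - s * c := by
      rw [map_sub, map_smul, smul_eq_mul, hFv q hqF]
    rw [he]
    simp only
    rw [hq]
    linarith [h2 ▸ h1]
  -- K2 : antitone in the second variable
  have K2 : ∀ (y : V) (s t : ℝ), s ≤ t → e y t ≤ e y s := by
    intro y s t hst
    obtain ⟨q, hqC, hq, _⟩ := mnorm_exists_min C hCcpt hCne (y - t • v)
    have h1 : -(q (y - s • v)) ≤ mnorm C (y - s • v) := mnorm_neg_le C hCcpt hCne _ hqC
    have h2 : ∀ r : ℝ, q (y - r • v) = q y - r * q v := by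
      intro r; rw [map_sub, map_smul, smul_eq_mul]
    have h3 : q v ≤ c := hqvc q hqC
    have h4 : t * (q v - c) ≤ s * (q v - c) :=
      mul_le_mul_of_nonpos_right hst (by linarith)
    rw [he]; simp only
    rw [hq, h2 t]
    rw [h2 s] at h1
    nlinarith
  -- K3 : the error eventually becomes small
  have K3 : ∀ (y : V) (η : ℝ), 0 < η → ∃ T : ℝ, ∀ s ≥ T, e y s ≤ η := by
    intro y η hη
    by_contra hcon
    push_neg at hcon
    have hbig : ∀ s : ℝ, η < e y s := by
      intro s
      obtain ⟨s', hs', hlt⟩ := hcon s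
      exact lt_of_lt_of_le hlt (K2 y s s' hs')
    -- choose minimizers
    have hsel : ∀ n : ℕ, ∃ q ∈ C, mnorm C (y - (n : ℝ) • v) = -(q (y - (n : ℝ) • v)) := by
      intro n
      obtain ⟨q, hqC, hq, _⟩ := mnorm_exists_min C hCcpt hCne (y - (n : ℝ) • v)
      exact ⟨q, hqC, hq⟩
    choose Q hQC hQ using hsel
    have hQev : ∀ n : ℕ, -(Q n y) + (n : ℝ) * (Q n v) - (n : ℝ) * c - mnorm F y > η := by
      intro n
      have := hbig (n : ℝ)
      rw [he] at this
      simp only at this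
      rw [hQ n, map_sub, map_smul, smul_eq_mul] at this
      linarith
    have hQp : ∀ n : ℕ, -(Q n y) ≤ M * ‖y‖ := by
      intro n
      calc -(Q n y) ≤ |Q n y| := neg_le_abs _
      _ ≤ ‖Q n‖ * ‖y‖ := (Q n).le_opNorm y
      _ ≤ M * ‖y‖ := mul_le_mul_of_nonneg_right (hM _ (hQC n)) (norm_nonneg _)
    set B : ℝ := M * ‖y‖ - η - mnorm F y with hB
    have hQbd : ∀ n : ℕ, (n : ℝ) * (c - Q n v) < B := by
      intro n; have := hQev n; have := hQp n; rw [hB]; nlinarith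
    obtain ⟨q', hq'C, φ, hφ, hconv⟩ := hCcpt.tendsto_subseq hQC
    have hev : Tendsto (fun k => Q (φ k) v) atTop (𝓝 (q' v)) :=
      ((ContinuousLinearMap.apply ℝ ℝ v).continuous.tendsto q').comp hconv
    have hnneg : ∀ n : ℕ, 0 ≤ c - Q n v := fun n => by linarith [hqvc _ (hQC n)]
    -- show c - Q (φ k) v → 0
    have hzero : Tendsto (fun k => c - Q (φ k) v) atTop (𝓝 0) := by
      have hBd : Tendsto (fun k => B / (φ k : ℝ)) atTop (𝓝 0) :=
        (tendsto_const_div_atTop_nhds_zero_nat B).comp hφ.tendsto_atTop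
      refine tendsto_of_tendsto_of_tendsto_of_le_of_le' tendsto_const_nhds hBd
        (Eventually.of_forall fun k => hnneg (φ k)) ?_
      filter_upwards [eventually_ge_atTop 1] with k hk
      have h1 : 1 ≤ φ k := hk.trans hφ.le_apply
      have hφk : (0 : ℝ) < (φ k : ℝ) := by exact_mod_cast Nat.lt_of_lt_of_le Nat.zero_lt_one h1
      rw [le_div_iff₀ hφk]
      linarith [hQbd (φ k)]
    have hq'v : q' v = c := by
      have h2 : Tendsto (fun k => c - (c - Q (φ k) v)) atTop (𝓝 (c - 0)) :=
        tendsto_const_nhds.sub hzero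
      rw [sub_zero] at h2
      have h3 : (fun k => c - (c - Q (φ k) v)) = fun k => Q (φ k) v := by
        funext k; ring
      rw [h3] at h2
      exact tendsto_nhds_unique hev h2
    have hq'F : q' ∈ F := by
      rw [hFeq]; exact ⟨hq'C, by simpa using hq'v⟩
    have hyb : ∀ k : ℕ, η + mnorm F y ≤ -(Q (φ k) y) := by
      intro k
      have h1 := hQev (φ k)
      have h2 : (0:ℝ) ≤ (φ k : ℝ) * (c - Q (φ k) v) :=
        mul_nonneg (Nat.cast_nonneg (φ k)) (hnneg (φ k))
      nlinarith
    have hylim : Tendsto (fun k => -(Q (φ k) y)) atTop (𝓝 (-(q' y))) :=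
      (((ContinuousLinearMap.apply ℝ ℝ y).continuous.tendsto q').comp hconv).neg
    have h6 : η + mnorm F y ≤ -(q' y) :=
      ge_of_tendsto hylim (Eventually.of_forall hyb)
    have h7 : -(q' y) ≤ mnorm F y := mnorm_neg_le F hFcpt hFne y hq'F
    linarith
  -- K4 : Lipschitz continuity in the first variable
  have K4 : ∀ (a b : V) (s : ℝ), e a s - e b s ≤ 2 * M * ‖a - b‖ := by
    intro a b s
    have h1 : mnorm C (a - s • v) - mnorm C (b - s • v) ≤ M * ‖(a - s • v) - (b - s • v)‖ :=
      mnorm_sub_le C hCcpt hCne hM _ _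
    have h3 : (a - s • v) - (b - s • v) = a - b := by abel
    rw [h3] at h1
    have h2 : mnorm F b - mnorm F a ≤ M * ‖b - a‖ :=
      mnorm_sub_le F hFcpt hFne (fun q hq => hM q (hFsub hq)) b a
    rw [norm_sub_rev b a] at h2
    rw [he]; simp only
    linarith
  -- dense sequence in V
  obtain ⟨u, hu⟩ : ∃ u : ℕ → V, DenseRange u := TopologicalSpace.exists_dense_seq V
  -- thresholds
  have hS : ∀ n : ℕ, ∃ T : ℝ, ∀ s ≥ T, e (p (n + 1) - p n) s ≤ ε * (1 / 2) ^ (n + 1) :=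
    fun n => K3 (p (n + 1) - p n) (ε * (1 / 2) ^ (n + 1)) (by positivity)
  choose S hSspec using hS
  have hR : ∀ n : ℕ, ∃ T : ℝ, ∀ s ≥ T, ∀ j ≤ n, e (p n - u j) s ≤ 1 / (n + 1) := by
    intro n
    have h : ∀ j : ℕ, ∃ T : ℝ, ∀ s ≥ T, e (p n - u j) s ≤ 1 / (n + 1) :=
      fun j => K3 (p n - u j) (1 / (n + 1)) (by positivity)
    choose Tj hTj using h
    refine ⟨(Finset.range (n + 1)).sup' ⟨0, by simp⟩ Tj, fun s hs j hj => hTj j s (le_trans ?_ hs)⟩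
    exact Finset.le_sup' Tj (Finset.mem_range.mpr (Nat.lt_succ_of_le hj))
  choose R hRspec using hR
  -- the recursive time sequence
  set t : ℕ → ℝ := fun n => Nat.rec (R 0) (fun n tn => max (tn + max (S n) 0) (R (n + 1))) n
    with ht
  have ht0 : t 0 = R 0 := rfl
  have htsucc : ∀ n : ℕ, t (n + 1) = max (t n + max (S n) 0) (R (n + 1)) := fun n => rfl
  have htS : ∀ n : ℕ, S n ≤ t (n + 1) - t n := by
    intro n
    have h1 : t n + max (S n) 0 ≤ t (n + 1) := (htsucc n) ▸ le_max_left _ _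
    have := le_max_left (S n) 0
    linarith
  have htR : ∀ n : ℕ, R n ≤ t n := by
    intro n
    cases n with
    | zero => exact le_of_eq ht0.symm
    | succ m => exact (htsucc m) ▸ le_max_right _ _
  -- the lifted sequence
  refine ⟨fun n => p n - t n • v, 2 * ε, by linarith, ?_, ?_⟩
  · -- geodesic condition
    intro n
    have hstep : ∀ i : ℕ, mnorm C ((p (i + 1) - t (i + 1) • v) - (p i - t i • v)) ≤
        mnorm F (p (i + 1) - p i) + ε * (1 / 2) ^ (i + 1) + (t (i + 1) - t i) * c := by
      intro i
      have hqd : (p (i + 1) - t (i + 1) • v) - (p i - t i • v)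
          = (p (i + 1) - p i) - (t (i + 1) - t i) • v := by
        rw [sub_smul]; abel
      have h1 : e (p (i + 1) - p i) (t (i + 1) - t i) ≤ ε * (1 / 2) ^ (i + 1) :=
        hSspec i _ (htS i)
      rw [he] at h1
      simp only at h1
      rw [hqd]
      linarith
    have hsum : ∑ i ∈ Finset.range n, mnorm C ((p (i + 1) - t (i + 1) • v) - (p i - t i • v))
        ≤ ∑ i ∈ Finset.range n, (mnorm F (p (i + 1) - p i) + ε * (1 / 2) ^ (i + 1)
            + (t (i + 1) - t i) * c) :=
      Finset.sum_le_sum fun i _ => hstep i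
    rw [Finset.sum_add_distrib, Finset.sum_add_distrib] at hsum
    have hgeom : ∑ i ∈ Finset.range n, ε * (1 / 2) ^ (i + 1) ≤ ε := by
      have h1 : ∑ i ∈ Finset.range n, ε * (1 / 2) ^ (i + 1)
          = (ε * (1 / 2)) * ∑ i ∈ Finset.range n, (1 / 2 : ℝ) ^ i := by
        rw [Finset.mul_sum]
        exact Finset.sum_congr rfl fun i _ => by ring
      rw [h1]
      nlinarith [sum_geometric_two_le n, hε.le]
    have htel : ∑ i ∈ Finset.range n, (t (i + 1) - t i) * c = (t n - t 0) * c := by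
      rw [← Finset.sum_mul, Finset.sum_range_sub]
    have hlow : mnorm F (p n - p 0) + (t n - t 0) * c
        ≤ mnorm C ((p n - t n • v) - (p 0 - t 0 • v)) := by
      have hqd : (p n - t n • v) - (p 0 - t 0 • v) = (p n - p 0) - (t n - t 0) • v := by
        rw [sub_smul]; abel
      have h := K1 (p n - p 0) (t n - t 0)
      rw [he] at h
      simp only at h
      rw [hqd]
      linarith
    have hg := hgeo n
    rw [htel] at hsum
    linarith
  · -- pointwise convergence
    have claim : ∀ y : V, Tendsto (fun n => e (p n - y) (t n)) atTop (𝓝 0) := by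
      intro y
      rw [Metric.tendsto_atTop]
      intro η hη
      obtain ⟨j, hj⟩ := hu.exists_dist_lt y (show (0:ℝ) < η / (2 * (2 * M + 1)) by positivity)
      obtain ⟨N₂, hN₂⟩ := exists_nat_gt (2 / η)
      refine ⟨max j N₂, fun n hn => ?_⟩
      have hnj : j ≤ n := le_trans (le_max_left _ _) hn
      have hnN : N₂ ≤ n := le_trans (le_max_right _ _) hn
      have h1 : e (p n - u j) (t n) ≤ 1 / (n + 1) := hRspec n (t n) (htR n) j hnj
      have h2 : e (p n - y) (t n) - e (p n - u j) (t n) ≤ 2 * M * ‖(p n - y) - (p n - u j)‖ :=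
        K4 _ _ _
      have h3 : (p n - y) - (p n - u j) = u j - y := by abel
      rw [h3] at h2
      have h4 : ‖u j - y‖ < η / (2 * (2 * M + 1)) := by
        rw [← dist_eq_norm, dist_comm]; exact hj
      have h5 : 2 * M * ‖u j - y‖ ≤ η / 2 := by
        have h5a := mul_le_mul_of_nonneg_left h4.le (by linarith : (0:ℝ) ≤ 2 * M)
        calc 2 * M * ‖u j - y‖ ≤ 2 * M * (η / (2 * (2 * M + 1))) := h5a
        _ ≤ η / 2 := by
            rw [← mul_div_assoc, div_le_div_iff₀ (by positivity) (by norm_num)]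
            nlinarith
      have h6 : 1 / ((n : ℝ) + 1) < η / 2 := by
        rw [div_lt_div_iff₀ (by positivity) (by norm_num)]
        have h6a : (2 : ℝ) / η < (n : ℝ) + 1 := by
          have : (N₂ : ℝ) ≤ n := Nat.cast_le.mpr hnN
          linarith
        rw [div_lt_iff₀ hη] at h6a
        linarith
      have h0 := K1 (p n - y) (t n)
      rw [Real.dist_eq, sub_zero, abs_of_nonneg h0]
      have h1' : e (p n - u j) (t n) ≤ 1 / ((n:ℝ) + 1) := by
        have hcast : (1 : ℝ) / ((n : ℕ) + 1 : ℝ) = 1 / ((n:ℝ) + 1) := by norm_num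
        rw [← hcast]
        exact_mod_cast h1
      have h7 : e (p n - u j) (t n) < η / 2 := lt_of_le_of_lt h1' h6
      calc e (p n - y) (t n) ≤ e (p n - u j) (t n) + 2 * M * ‖u j - y‖ := by linarith
      _ < η / 2 + η / 2 := add_lt_add_of_lt_of_le h7 h5
      _ = η := by ring
    intro x
    have claim0 : Tendsto (fun n => e (p n) (t n)) atTop (𝓝 0) := by
      have h := claim 0
      simpa using h
    have hmain : Tendsto (fun n => (mnorm F (p n - x) - mnorm F (p n))
        + (e (p n - x) (t n) - e (p n) (t n))) atTop (𝓝 (g x + (0 - 0))) :=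
      (hptwise x).add ((claim x).sub claim0)
    rw [sub_zero, add_zero] at hmain
    refine hmain.congr fun n => ?_
    have hqd : (p n - t n • v) - x = (p n - x) - t n • v := by abel
    rw [he]
    simp only
    rw [hqd]
    ring
end
end

section
/- Let C be a nonempty compact convex subset of the dual V* of a finite-dimensional real normed space V, let F be a nonempty exposed face of C, and let f : V* → ℝ be an affine function with f = 0 on F and f > 0 on C \ F. Let f̂ := f − f(0) be the linear functional on V* with the same gradient, regarded (via the canonical identification V** ≅ V) as an element of V. Then for every r ∈ V, the quantity |λ f̂ + r|_C − |λ f̂ + r|_F tends to 0 as λ → ∞. -/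
open Filter Topology Set

noncomputable section

/-- Let `F` be a nonempty exposed face of a nonempty compact convex set `C ⊆ V*`, and
`f : V* → ℝ` affine with `f = 0` on `F` and `f > 0` on `C \ F`. Let `f̂ ∈ V` represent
the linear functional `f − f(0)` on `V*` (via `V** ≅ V`). Then for every `r ∈ V`,
`|λ f̂ + r|_C − |λ f̂ + r|_F → 0` as `λ → ∞`. -/
theorem mnorm_diff_tendsto_zero (V : Type*) [NormedAddCommGroup V] [NormedSpace ℝ V]
    [FiniteDimensional ℝ V]
    (C F : Set (V →L[ℝ] ℝ)) (hCne : C.Nonempty) (hCcpt : IsCompact C)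
    (hCconv : Convex ℝ C) (hF : IsExposedFace C F) (hFne : F.Nonempty)
    (f : (V →L[ℝ] ℝ) → ℝ)
    (haff : ∃ (l : (V →L[ℝ] ℝ) →ₗ[ℝ] ℝ) (c : ℝ), ∀ q, f q = l q + c)
    (hf0 : ∀ q ∈ F, f q = 0) (hfpos : ∀ q ∈ C \ F, 0 < f q)
    (fhat : V) (hfhat : ∀ q : V →L[ℝ] ℝ, q fhat = f q - f 0) :
    ∀ r : V,
      Tendsto (fun lam : ℝ => mnorm C (lam • fhat + r) - mnorm F (lam • fhat + r))
        atTop (𝓝 0) := by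
  intro r
  obtain ⟨l, c, hlc⟩ := haff
  have hfcont : Continuous f := by
    have h1 : Continuous fun q : (V →L[ℝ] ℝ) => l q + c :=
      l.continuous_of_finiteDimensional.add continuous_const
    have h2 : f = fun q => l q + c := funext hlc
    rw [h2]; exact h1
  have hfnn : ∀ q ∈ C, 0 ≤ f q := by
    intro q hq
    by_cases h : q ∈ F
    · exact (hf0 q h).ge
    · exact (hfpos q ⟨hq, h⟩).le
  have hFC : F ⊆ C := by
    obtain ⟨l₀, c₀, -, -, hFeq⟩ := hF
    rw [hFeq]; exact fun x hx => hx.1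
  have hev : ∀ p : V, Continuous fun q : V →L[ℝ] ℝ => q p := fun p =>
    (ContinuousLinearMap.apply ℝ ℝ p).continuous
  set a := sInf ((fun q : V →L[ℝ] ℝ => q r) '' F) with ha
  have hbC : ∀ p : V, BddBelow ((fun q : V →L[ℝ] ℝ => q p) '' C) := fun p =>
    (hCcpt.image (hev p)).bddBelow
  have hbF : ∀ p : V, BddBelow ((fun q : V →L[ℝ] ℝ => q p) '' F) := fun p =>
    (hbC p).mono (image_mono hFC)
  have haF : ∀ q ∈ F, a ≤ q r := fun q hq => csInf_le (hbF r) ⟨q, hq, rfl⟩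
  obtain ⟨q₁, hq₁C, hq₁min⟩ := hCcpt.exists_isMinOn hCne (hev r).continuousOn
  have key : ∀ ε > (0:ℝ), ∃ Λ : ℝ, 0 ≤ Λ ∧
      ∀ lam ≥ Λ, ∀ q ∈ C, a - ε ≤ lam * f q + q r := by
    intro ε hε
    by_cases hne : (C ∩ {q : V →L[ℝ] ℝ | q r ≤ a - ε}).Nonempty
    · have hclosed : IsClosed {q : V →L[ℝ] ℝ | q r ≤ a - ε} :=
        isClosed_le (hev r) continuous_const
      have hKcpt : IsCompact (C ∩ {q : V →L[ℝ] ℝ | q r ≤ a - ε}) :=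
        hCcpt.inter_right hclosed
      obtain ⟨q₂, hq₂, hq₂min⟩ := hKcpt.exists_isMinOn hne hfcont.continuousOn
      have hδ : 0 < f q₂ := by
        apply hfpos q₂ ⟨hq₂.1, ?_⟩
        intro hqF
        have h1 := haF q₂ hqF
        have h2 := hq₂.2
        simp only [mem_setOf_eq] at h2
        linarith
      refine ⟨max 0 ((a - ε - q₁ r) / f q₂), le_max_left _ _, ?_⟩
      intro lam hlam q hq
      have hlam0 : 0 ≤ lam := le_trans (le_max_left _ _) hlam
      by_cases hqK : q r ≤ a - ε
      · have hfq : f q₂ ≤ f q := hq₂min ⟨hq, hqK⟩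
        have h1 : a - ε - q₁ r ≤ lam * f q₂ :=
          (div_le_iff₀ hδ).1 (le_trans (le_max_right _ _) hlam)
        have h2 : q₁ r ≤ q r := hq₁min hq
        nlinarith [mul_le_mul_of_nonneg_left hfq hlam0]
      · push_neg at hqK
        have h3 := mul_nonneg hlam0 (hfnn q hq)
        linarith
    · refine ⟨0, le_refl _, ?_⟩
      intro lam hlam q hq
      have hq' : ¬ q r ≤ a - ε := fun h => hne ⟨q, hq, h⟩
      push_neg at hq'
      have h3 := mul_nonneg hlam (hfnn q hq)
      linarith
  rw [NormedAddCommGroup.tendsto_nhds_zero]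
  intro ε hε
  obtain ⟨Λ, hΛ0, hΛ⟩ := key (ε / 2) (by linarith)
  filter_upwards [eventually_ge_atTop Λ] with lam hlam
  set p : V := lam • fhat + r with hp
  have hqp : ∀ q : V →L[ℝ] ℝ, q p = lam * (f q - f 0) + q r := by
    intro q
    rw [hp, map_add, map_smul, hfhat q]
    simp [smul_eq_mul]
  have neF : ((fun q : V →L[ℝ] ℝ => q p) '' F).Nonempty := hFne.image _
  have neC : ((fun q : V →L[ℝ] ℝ => q p) '' C).Nonempty := hCne.image _
  set sF := sInf ((fun q : V →L[ℝ] ℝ => q p) '' F) with hsF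
  set sC := sInf ((fun q : V →L[ℝ] ℝ => q p) '' C) with hsC
  have h1 : sC ≤ sF := csInf_le_csInf (hbC p) neF (image_mono hFC)
  have h2 : sF + lam * f 0 ≤ a := by
    have : ∀ x ∈ (fun q : V →L[ℝ] ℝ => q r) '' F, sF + lam * f 0 ≤ x := by
      rintro x ⟨q, hq, rfl⟩
      have hb : sF ≤ q p := csInf_le (hbF p) ⟨q, hq, rfl⟩
      rw [hqp q, hf0 q hq] at hb
      linarith
    exact le_csInf (hFne.image _) this
  have h3 : a - ε / 2 - lam * f 0 ≤ sC := by
    apply le_csInf neC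
    rintro x ⟨q, hq, rfl⟩
    have := hΛ lam hlam q hq
    show a - ε / 2 - lam * f 0 ≤ q p
    rw [hqp q]
    linarith
  have hgoal : mnorm C p - mnorm F p = sF - sC := by
    simp only [mnorm, ← hsF, ← hsC]; ring
  rw [hgoal, Real.norm_eq_abs, abs_of_nonneg (by linarith)]
  linarith
end
end
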